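/- (TwINEst oracle complexity) Let A ∈ R^{d×n}, let B = AA^⊤, let M = max_i B_{ii}, and suppose not all diagonal entries of B are equal, with gap Δ = M − max{B_{jj} : B_{jj} < M} > 0. Let D^m(B) be the Hutchinson diagonal estimator of B from m i.i.d. Rademacher vectors, let j* = argmax_i D^m_i(B), and let T^m(A) = ||A^⊤ e_{j*}||_2. If m > (8 log(2d/δ)/Δ²) · ||B − diag(B)||_{2→∞}², then with probability at least 1 − δ, T^m(A) = ||A||_{2→∞}. -/

import Mathlib

open scoped BigOperators ENNReal
open MeasureTheory ProbabilityTheory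

/-- The Rademacher law on ℝ: `±1` with probability `1/2` each. -/
noncomputable def rademacherLaw : Measure ℝ :=
  (2 : ℝ≥0∞)⁻¹ • Measure.dirac (1 : ℝ) + (2 : ℝ≥0∞)⁻¹ • Measure.dirac (-1 : ℝ)

open scoped Classical
open Finset

instance : IsProbabilityMeasure rademacherLaw := by
  constructor
  simp [rademacherLaw]
  rw [ENNReal.inv_two_add_inv_two]

lemma pi_rademacher_eq {ι : Type*} [Fintype ι] [DecidableEq ι] :
    Measure.pi (fun _ : ι => rademacherLaw) =
      ((2 : ℝ≥0∞)⁻¹ ^ (Fintype.card ι)) •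
        ∑ f ∈ Fintype.piFinset (fun _ : ι => ({1, -1} : Finset ℝ)), Measure.dirac f := by
  apply Measure.pi_eq
  intro s hs
  have hps : MeasurableSet (Set.pi Set.univ s) := MeasurableSet.univ_pi hs
  rw [Measure.smul_apply, Measure.coe_finset_sum, Finset.sum_apply]
  have hdir : ∀ f : ι → ℝ, Measure.dirac f (Set.pi Set.univ s)
      = ∏ i, (s i).indicator (fun _ => (1 : ℝ≥0∞)) (f i) := by
    intro f
    rw [Measure.dirac_apply' _ hps]
    by_cases h : f ∈ Set.pi Set.univ s
    · rw [Set.indicator_of_mem h]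
      rw [Set.mem_univ_pi] at h
      exact (Finset.prod_eq_one fun i _ => (Set.indicator_of_mem (h i) _)).symm
    · rw [Set.indicator_of_notMem h]
      rw [Set.mem_univ_pi] at h
      push_neg at h
      obtain ⟨i, hi⟩ := h
      exact (Finset.prod_eq_zero (Finset.mem_univ i) (Set.indicator_of_notMem hi _)).symm
  simp_rw [hdir]
  rw [Finset.sum_prod_piFinset ({1, -1} : Finset ℝ)
    (fun i y => (s i).indicator (fun _ => (1 : ℝ≥0∞)) y)]
  have hr : ∀ i, rademacherLaw (s i)
      = 2⁻¹ * ∑ y ∈ ({1, -1} : Finset ℝ), (s i).indicator (fun _ => (1:ℝ≥0∞)) y := by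
    intro i
    rw [Finset.sum_pair (by norm_num : (1:ℝ) ≠ -1)]
    simp [rademacherLaw, Measure.dirac_apply' _ (hs i), mul_add]
    rfl
  simp_rw [hr]
  rw [Finset.prod_mul_distrib, Finset.prod_const, Finset.card_univ, smul_eq_mul]

lemma pi_rademacher_apply {ι : Type*} [Fintype ι] [DecidableEq ι] {s : Set (ι → ℝ)}
    (hs : MeasurableSet s) :
    Measure.pi (fun _ : ι => rademacherLaw) s
      = (2 : ℝ≥0∞)⁻¹ ^ (Fintype.card ι) *
        (((Fintype.piFinset (fun _ : ι => ({1, -1} : Finset ℝ))).filter (· ∈ s)).card : ℕ) := by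
  rw [pi_rademacher_eq, Measure.smul_apply, Measure.coe_finset_sum, Finset.sum_apply,
    smul_eq_mul]
  congr 1
  rw [Finset.card_filter]
  push_cast
  refine Finset.sum_congr rfl fun f _ => ?_
  rw [Measure.dirac_apply' _ hs, Set.indicator_apply]
  split <;> simp_all

lemma pi_rademacher_sign {ι : Type*} [Fintype ι] [DecidableEq ι] :
    Measure.pi (fun _ : ι => rademacherLaw) {x : ι → ℝ | ∀ p, x p = 1 ∨ x p = -1} = 1 := by
  rw [pi_rademacher_eq, Measure.smul_apply, Measure.coe_finset_sum, Finset.sum_apply,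
    smul_eq_mul]
  have hone : ∀ f ∈ Fintype.piFinset (fun _ : ι => ({1, -1} : Finset ℝ)),
      Measure.dirac f {x : ι → ℝ | ∀ p, x p = 1 ∨ x p = -1} = 1 := by
    intro f hf
    refine Measure.dirac_apply_of_mem ?_
    intro p
    simpa using Fintype.mem_piFinset.1 hf p
  rw [Finset.sum_congr rfl hone, Finset.sum_const, Fintype.card_piFinset, nsmul_eq_mul,
    mul_one]
  have hc2 : ({1, -1} : Finset ℝ).card = 2 := by
    rw [Finset.card_insert_of_notMem (by norm_num), Finset.card_singleton]
  simp only [hc2, Finset.prod_const, Finset.card_univ]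
  rw [Nat.cast_pow, Nat.cast_ofNat, ← mul_pow,
    ENNReal.inv_mul_cancel (by norm_num) (by norm_num), one_pow]

lemma pm_mul_self {x : ℝ} (h : x = 1 ∨ x = -1) : x * x = 1 := by
  rcases h with h | h <;> simp [h]

lemma mem_pm {x : ℝ} : x ∈ ({1, -1} : Finset ℝ) ↔ x = 1 ∨ x = -1 := by
  simp [Finset.mem_insert, Finset.mem_singleton]

lemma row_eq {d : ℕ} (i : Fin d) (c : Fin d → ℝ) (u : ℝ) :
    ∑ r ∈ Fintype.piFinset (fun _ : Fin d => ({1, -1} : Finset ℝ)),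
        ∏ j ∈ Finset.univ \ {i}, Real.exp (u * (c j * (r i * r j)))
      = 2 * ∏ j ∈ Finset.univ \ {i}, (Real.exp (u * c j) + Real.exp (-(u * c j))) := by
  have hmem : ∀ r : Fin d → ℝ, r ∈ Fintype.piFinset (fun _ : Fin d => ({1, -1} : Finset ℝ)) →
      ∀ j, r j = 1 ∨ r j = -1 := by
    intro r hr j
    exact mem_pm.1 (Fintype.mem_piFinset.1 hr j)
  have hσ : ∀ r : Fin d → ℝ, r ∈ Fintype.piFinset (fun _ : Fin d => ({1, -1} : Finset ℝ)) →
      (fun j => if j = i then r i else r i * r j) ∈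
        Fintype.piFinset (fun _ : Fin d => ({1, -1} : Finset ℝ)) := by
    intro r hr
    rw [Fintype.mem_piFinset]
    intro j
    rw [mem_pm]
    by_cases hj : j = i
    · simp only [hj, if_pos rfl]; exact hmem r hr i
    · simp only [if_neg hj]
      rcases hmem r hr i with h1 | h1 <;> rcases hmem r hr j with h2 | h2 <;>
        simp [h1, h2]
  have hinv : ∀ r : Fin d → ℝ, r ∈ Fintype.piFinset (fun _ : Fin d => ({1, -1} : Finset ℝ)) →
      (fun j => if j = i then (if (i:Fin d) = i then r i else r i * r i)
        else (if (i:Fin d) = i then r i else r i * r i) * (if j = i then r i else r i * r j)) = r :=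
    by
    intro r hr
    funext j
    by_cases hj : j = i
    · simp [hj]
    · simp only [if_neg hj, eq_self_iff_true, if_true, ← mul_assoc,
        pm_mul_self (hmem r hr i), one_mul]
  have h1 : ∑ r ∈ Fintype.piFinset (fun _ : Fin d => ({1, -1} : Finset ℝ)),
        ∏ j ∈ Finset.univ \ {i}, Real.exp (u * (c j * (r i * r j)))
      = ∑ r ∈ Fintype.piFinset (fun _ : Fin d => ({1, -1} : Finset ℝ)),
        ∏ j ∈ Finset.univ \ {i}, Real.exp (u * (c j * r j)) := by
    refine Finset.sum_nbij' (fun r j => if j = i then r i else r i * r j)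
      (fun r j => if j = i then r i else r i * r j) hσ hσ ?_ ?_ ?_
    · intro r hr
      exact hinv r hr
    · intro r hr
      exact hinv r hr
    · intro r hr
      refine Finset.prod_congr rfl fun j hj => ?_
      have hji : j ≠ i := by
        rcases Finset.mem_sdiff.1 hj with ⟨-, h⟩
        simpa using h
      simp [if_neg hji]
  rw [h1]
  have h2 : ∀ r : Fin d → ℝ, ∏ j ∈ Finset.univ \ {i}, Real.exp (u * (c j * r j))
      = ∏ j, (if j = i then 1 else Real.exp (u * (c j * r j))) := by
    intro r
    rw [← Finset.prod_subset (Finset.subset_univ (Finset.univ \ {i}))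
      (fun j _ hj => ?_)]
    · refine Finset.prod_congr rfl fun j hj => ?_
      have hji : j ≠ i := by
        rcases Finset.mem_sdiff.1 hj with ⟨-, h⟩
        simpa using h
      rw [if_neg hji]
    · have : j = i := by simpa using hj
      simp [this]
  simp_rw [h2]
  rw [Finset.sum_prod_piFinset ({1, -1} : Finset ℝ)
    (fun j y => if j = i then 1 else Real.exp (u * (c j * y)))]
  rw [Finset.prod_eq_mul_prod_sdiff_singleton_of_mem (Finset.mem_univ i)
    (fun j => ∑ y ∈ ({1, -1} : Finset ℝ), if j = i then 1 else Real.exp (u * (c j * y)))]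
  have hsum1 : (∑ y ∈ ({1, -1} : Finset ℝ), if (i : Fin d) = i then (1:ℝ)
      else Real.exp (u * (c i * y))) = 2 := by
    rw [Finset.sum_pair (by norm_num : (1:ℝ) ≠ -1)]
    norm_num
  rw [hsum1]
  congr 1
  refine Finset.prod_congr rfl fun j hj => ?_
  have hji : j ≠ i := by
    rcases Finset.mem_sdiff.1 hj with ⟨-, h⟩
    simpa using h
  rw [Finset.sum_pair (by norm_num : (1:ℝ) ≠ -1), if_neg hji, if_neg hji]
  rw [mul_one, mul_neg_one, mul_neg]

lemma exp_sum_eq {d m : ℕ} (i : Fin d) (c : Fin d → ℝ) (u : ℝ) :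
    ∑ f ∈ Fintype.piFinset (fun _ : Fin m × Fin d => ({1, -1} : Finset ℝ)),
        Real.exp (u * ∑ k : Fin m, ∑ j ∈ Finset.univ \ {i}, c j * (f (k, i) * f (k, j)))
      = (2 * ∏ j ∈ Finset.univ \ {i},
          (Real.exp (u * c j) + Real.exp (-(u * c j)))) ^ m := by
  have expand : ∀ f : Fin m × Fin d → ℝ,
      Real.exp (u * ∑ k : Fin m, ∑ j ∈ Finset.univ \ {i}, c j * (f (k, i) * f (k, j)))
        = ∏ k : Fin m, ∏ j ∈ Finset.univ \ {i},
            Real.exp (u * (c j * (f (k, i) * f (k, j)))) := by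
    intro f
    rw [Finset.mul_sum, Real.exp_sum]
    refine Finset.prod_congr rfl fun k _ => ?_
    rw [Finset.mul_sum, Real.exp_sum]
  simp_rw [expand]
  have step : ∑ f ∈ Fintype.piFinset (fun _ : Fin m × Fin d => ({1, -1} : Finset ℝ)),
        ∏ k : Fin m, ∏ j ∈ Finset.univ \ {i},
          Real.exp (u * (c j * (f (k, i) * f (k, j))))
      = ∑ g ∈ Fintype.piFinset
          (fun _ : Fin m => Fintype.piFinset (fun _ : Fin d => ({1, -1} : Finset ℝ))),
        ∏ k : Fin m, ∏ j ∈ Finset.univ \ {i},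
          Real.exp (u * (c j * (g k i * g k j))) := by
    refine Finset.sum_nbij' (fun f => fun k j => f (k, j)) (fun g => fun p => g p.1 p.2)
      ?_ ?_ ?_ ?_ ?_
    · intro f hf
      rw [Fintype.mem_piFinset] at hf ⊢
      intro k
      rw [Fintype.mem_piFinset]
      intro j
      exact hf (k, j)
    · intro g hg
      rw [Fintype.mem_piFinset] at hg ⊢
      intro p
      exact Fintype.mem_piFinset.1 (hg p.1) p.2
    · intro f _
      rfl
    · intro g _
      rfl
    · intro f _
      rfl
  rw [step, Finset.sum_prod_piFinset
    (Fintype.piFinset (fun _ : Fin d => ({1, -1} : Finset ℝ)))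
    (fun k r => ∏ j ∈ Finset.univ \ {i}, Real.exp (u * (c j * (r i * r j))))]
  rw [Finset.prod_const, row_eq i c u, Finset.card_univ, Fintype.card_fin]

lemma count_le {d m : ℕ} (i : Fin d) (c : Fin d → ℝ) (t a : ℝ) (ht : 0 ≤ t) :
    ((((Fintype.piFinset (fun _ : Fin m × Fin d => ({1, -1} : Finset ℝ))).filter
        (fun f => a ≤ |∑ k : Fin m, ∑ j ∈ Finset.univ \ {i},
          c j * (f (k, i) * f (k, j))|)).card : ℝ))
      ≤ Real.exp (-(t * a)) * (2 * (2 * ∏ j ∈ Finset.univ \ {i},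
          (Real.exp (t * c j) + Real.exp (-(t * c j)))) ^ m) := by
  set S := fun f : Fin m × Fin d → ℝ =>
    ∑ k : Fin m, ∑ j ∈ Finset.univ \ {i}, c j * (f (k, i) * f (k, j)) with hS
  have key : ∀ f : Fin m × Fin d → ℝ, a ≤ |S f| →
      (1 : ℝ) ≤ Real.exp (-(t * a)) * (Real.exp (t * S f) + Real.exp (-t * S f)) := by
    intro f hf
    have h1 : Real.exp (t * |S f|) ≤ Real.exp (t * S f) + Real.exp (-t * S f) := by
      rcases abs_cases (S f) with ⟨h, _⟩ | ⟨h, _⟩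
      · rw [h]
        nlinarith [Real.exp_pos (-t * S f)]
      · rw [h]
        have : t * -S f = -t * S f := by ring
        rw [this]
        nlinarith [Real.exp_pos (t * S f)]
    have h2 : (1 : ℝ) ≤ Real.exp (-(t * a)) * Real.exp (t * |S f|) := by
      rw [← Real.exp_add]
      have : 0 ≤ -(t * a) + t * |S f| := by nlinarith [mul_le_mul_of_nonneg_left hf ht]
      calc (1 : ℝ) = Real.exp 0 := Real.exp_zero.symm
        _ ≤ _ := Real.exp_le_exp.2 this
    calc (1 : ℝ) ≤ Real.exp (-(t * a)) * Real.exp (t * |S f|) := h2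
      _ ≤ _ := by
          apply mul_le_mul_of_nonneg_left h1 (Real.exp_pos _).le
  calc ((((Fintype.piFinset (fun _ : Fin m × Fin d => ({1, -1} : Finset ℝ))).filter
        (fun f => a ≤ |S f|)).card : ℝ))
      = ∑ f ∈ (Fintype.piFinset (fun _ : Fin m × Fin d => ({1, -1} : Finset ℝ))).filter
          (fun f => a ≤ |S f|), (1 : ℝ) := by
        rw [Finset.sum_const, nsmul_eq_mul, mul_one]
    _ ≤ ∑ f ∈ (Fintype.piFinset (fun _ : Fin m × Fin d => ({1, -1} : Finset ℝ))).filter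
          (fun f => a ≤ |S f|),
          Real.exp (-(t * a)) * (Real.exp (t * S f) + Real.exp (-t * S f)) := by
        refine Finset.sum_le_sum fun f hf => ?_
        exact key f (Finset.mem_filter.1 hf).2
    _ ≤ ∑ f ∈ Fintype.piFinset (fun _ : Fin m × Fin d => ({1, -1} : Finset ℝ)),
          Real.exp (-(t * a)) * (Real.exp (t * S f) + Real.exp (-t * S f)) := by
        refine Finset.sum_le_sum_of_subset_of_nonneg (Finset.filter_subset _ _)
          fun f _ _ => ?_
        positivity
    _ = Real.exp (-(t * a)) *
        ((∑ f ∈ Fintype.piFinset (fun _ : Fin m × Fin d => ({1, -1} : Finset ℝ)),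
            Real.exp (t * S f))
          + ∑ f ∈ Fintype.piFinset (fun _ : Fin m × Fin d => ({1, -1} : Finset ℝ)),
            Real.exp (-t * S f)) := by
        rw [← Finset.mul_sum, Finset.sum_add_distrib]
    _ = _ := by
        rw [hS]
        rw [exp_sum_eq i c t, exp_sum_eq i c (-t)]
        have : ∏ j ∈ Finset.univ \ {i}, (Real.exp (-t * c j) + Real.exp (-(-t * c j)))
            = ∏ j ∈ Finset.univ \ {i}, (Real.exp (t * c j) + Real.exp (-(t * c j))) := by
          refine Finset.prod_congr rfl fun j _ => ?_
          rw [neg_mul, neg_neg]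
          ring
        rw [this]
        ring

lemma count_le' {d m : ℕ} (hd : 0 < d) (i : Fin d) (c : Fin d → ℝ) (t a : ℝ) (ht : 0 ≤ t) :
    ((((Fintype.piFinset (fun _ : Fin m × Fin d => ({1, -1} : Finset ℝ))).filter
        (fun f => a ≤ |∑ k : Fin m, ∑ j ∈ Finset.univ \ {i},
          c j * (f (k, i) * f (k, j))|)).card : ℝ))
      ≤ (2 : ℝ) ^ (d * m) * (2 * Real.exp
          ((m : ℝ) * (t ^ 2 * (∑ j ∈ Finset.univ \ {i}, c j ^ 2) / 2) - t * a)) := by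
  refine (count_le i c t a ht).trans ?_
  have hQ : ∏ j ∈ Finset.univ \ {i}, (Real.exp (t * c j) + Real.exp (-(t * c j)))
      ≤ (2 : ℝ) ^ (d - 1) * Real.exp (t ^ 2 * (∑ j ∈ Finset.univ \ {i}, c j ^ 2) / 2) := by
    have hfac : ∀ j : Fin d, Real.exp (t * c j) + Real.exp (-(t * c j))
        ≤ 2 * Real.exp ((t * c j) ^ 2 / 2) := by
      intro j
      have := Real.cosh_le_exp_half_sq (t * c j)
      rw [Real.cosh_eq] at this
      linarith
    calc ∏ j ∈ Finset.univ \ {i}, (Real.exp (t * c j) + Real.exp (-(t * c j)))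
        ≤ ∏ j ∈ Finset.univ \ {i}, 2 * Real.exp ((t * c j) ^ 2 / 2) :=
          Finset.prod_le_prod (fun j _ => by positivity) (fun j _ => hfac j)
      _ = (2 : ℝ) ^ (d - 1) * Real.exp (t ^ 2 * (∑ j ∈ Finset.univ \ {i}, c j ^ 2) / 2) := by
          rw [Finset.prod_mul_distrib, Finset.prod_const]
          congr 1
          · congr 1
            rw [Finset.card_sdiff_of_subset (Finset.subset_univ _), Finset.card_univ,
              Fintype.card_fin, Finset.card_singleton]
          · rw [← Real.exp_sum]
            congr 1
            have : t ^ 2 * (∑ j ∈ Finset.univ \ {i}, c j ^ 2) / 2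
                = ∑ j ∈ Finset.univ \ {i}, (t * c j) ^ 2 / 2 := by
              rw [Finset.mul_sum, Finset.sum_div]
              exact Finset.sum_congr rfl fun j _ => by ring
            rw [this]
  set V := ∑ j ∈ Finset.univ \ {i}, c j ^ 2 with hV
  set Q := ∏ j ∈ Finset.univ \ {i}, (Real.exp (t * c j) + Real.exp (-(t * c j))) with hQdef
  have hQ0 : 0 ≤ Q := by
    rw [hQdef]
    exact Finset.prod_nonneg fun j _ => by positivity
  calc Real.exp (-(t * a)) * (2 * (2 * Q) ^ m)
      ≤ Real.exp (-(t * a)) * (2 * ((2 : ℝ) ^ d * Real.exp (t ^ 2 * V / 2)) ^ m) := by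
        apply mul_le_mul_of_nonneg_left _ (Real.exp_pos _).le
        apply mul_le_mul_of_nonneg_left _ (by norm_num)
        apply pow_le_pow_left₀ (by positivity)
        calc 2 * Q ≤ 2 * ((2 : ℝ) ^ (d - 1) * Real.exp (t ^ 2 * V / 2)) :=
              mul_le_mul_of_nonneg_left hQ (by norm_num)
          _ = (2 : ℝ) ^ d * Real.exp (t ^ 2 * V / 2) := by
              rw [← mul_assoc]
              congr 1
              rw [← pow_succ']
              congr 1
              omega
    _ = (2 : ℝ) ^ (d * m) * (2 * Real.exp ((m : ℝ) * (t ^ 2 * V / 2) - t * a)) := by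
        rw [mul_pow, ← pow_mul, ← Real.exp_nat_mul]
        have : Real.exp ((m : ℝ) * (t ^ 2 * V / 2) - t * a)
            = Real.exp (-(t * a)) * Real.exp ((m : ℝ) * (t ^ 2 * V / 2)) := by
          rw [← Real.exp_add]
          ring_nf
        rw [this]
        ring

lemma Sfun_measurable {d m : ℕ} (i : Fin d) (c : Fin d → ℝ) :
    Measurable (fun x : Fin m × Fin d → ℝ =>
      ∑ k : Fin m, ∑ j ∈ Finset.univ \ {i}, c j * (x (k, i) * x (k, j))) := by
  refine Finset.measurable_sum _ fun k _ => ?_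
  refine Finset.measurable_sum _ fun j _ => ?_
  exact (measurable_const.mul ((measurable_pi_apply _).mul (measurable_pi_apply _)))

lemma measure_bad_le {d m : ℕ} (hd : 0 < d) (i : Fin d) (c : Fin d → ℝ) (t a : ℝ)
    (ht : 0 ≤ t) :
    Measure.pi (fun _ : Fin m × Fin d => rademacherLaw)
      {x | a ≤ |∑ k : Fin m, ∑ j ∈ Finset.univ \ {i}, c j * (x (k, i) * x (k, j))|}
      ≤ ENNReal.ofReal (2 * Real.exp
          ((m : ℝ) * (t ^ 2 * (∑ j ∈ Finset.univ \ {i}, c j ^ 2) / 2) - t * a)) := by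
  have hmeas : MeasurableSet {x : Fin m × Fin d → ℝ |
      a ≤ |∑ k : Fin m, ∑ j ∈ Finset.univ \ {i}, c j * (x (k, i) * x (k, j))|} :=
    measurableSet_le measurable_const (Sfun_measurable i c).abs
  rw [pi_rademacher_apply hmeas]
  have hcard : Fintype.card (Fin m × Fin d) = d * m := by
    rw [Fintype.card_prod, Fintype.card_fin, Fintype.card_fin, Nat.mul_comm]
  rw [hcard]
  have hfilter : ((Fintype.piFinset (fun _ : Fin m × Fin d => ({1, -1} : Finset ℝ))).filter
        (· ∈ {x : Fin m × Fin d → ℝ |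
          a ≤ |∑ k : Fin m, ∑ j ∈ Finset.univ \ {i}, c j * (x (k, i) * x (k, j))|})).card
      = ((Fintype.piFinset (fun _ : Fin m × Fin d => ({1, -1} : Finset ℝ))).filter
        (fun f => a ≤ |∑ k : Fin m, ∑ j ∈ Finset.univ \ {i},
          c j * (f (k, i) * f (k, j))|)).card := by
    congr 1
  rw [hfilter]
  have hreal := count_le' (m := m) hd i c t a ht
  set cnt := ((Fintype.piFinset (fun _ : Fin m × Fin d => ({1, -1} : Finset ℝ))).filter
        (fun f => a ≤ |∑ k : Fin m, ∑ j ∈ Finset.univ \ {i},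
          c j * (f (k, i) * f (k, j))|)).card with hcnt
  have h1 : (cnt : ℝ≥0∞) ≤ (2 : ℝ≥0∞) ^ (d * m) * ENNReal.ofReal (2 * Real.exp
      ((m : ℝ) * (t ^ 2 * (∑ j ∈ Finset.univ \ {i}, c j ^ 2) / 2) - t * a)) := by
    have : (cnt : ℝ≥0∞) = ENNReal.ofReal (cnt : ℝ) := by
      rw [ENNReal.ofReal_natCast]
    rw [this]
    refine (ENNReal.ofReal_le_ofReal hreal).trans ?_
    rw [ENNReal.ofReal_mul (by positivity)]
    gcongr
    rw [show ((2:ℝ)^(d*m)) = ((2:ℝ≥0∞)^(d*m)).toReal by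
      rw [ENNReal.toReal_pow]; norm_num]
    rw [ENNReal.ofReal_toReal (ENNReal.pow_ne_top (by norm_num))]
  calc (2 : ℝ≥0∞)⁻¹ ^ (d * m) * (cnt : ℕ)
      ≤ (2 : ℝ≥0∞)⁻¹ ^ (d * m) * ((2 : ℝ≥0∞) ^ (d * m) * ENNReal.ofReal (2 * Real.exp
          ((m : ℝ) * (t ^ 2 * (∑ j ∈ Finset.univ \ {i}, c j ^ 2) / 2) - t * a))) := by
        exact mul_le_mul_right h1 _
    _ = _ := by
        rw [← mul_assoc, ← mul_pow, ENNReal.inv_mul_cancel (by norm_num) (by norm_num),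
          one_pow, one_mul]

/-- TwINEst oracle complexity: with `B = AAᵀ`, gap `Δ` between the largest
diagonal entry of `B` and the largest strictly smaller one, Hutchinson diagonal
estimate `Dᵐ(B)` from `m` i.i.d. Rademacher vectors, `j* = argmax_i Dᵐᵢ(B)` and
`Tᵐ(A) = ‖Aᵀ e_{j*}‖₂`: if `m > (8 log(2d/δ)/Δ²) ‖B − diag(B)‖_{2→∞}²`, then
`Tᵐ(A) = ‖A‖_{2→∞}` with probability at least `1 − δ`. -/
theorem twinest_oracle_complexity {Ω : Type*} [MeasurableSpace Ω]
    (μ : Measure Ω) [IsProbabilityMeasure μ] (d n m : ℕ) (hd : 0 < d) (hm : 0 < m)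
    (A : Matrix (Fin d) (Fin n) ℝ)
    (X : Ω → Fin m → Fin d → ℝ)
    (hmeas : ∀ k i, Measurable fun ω => X ω k i)
    (hindep : iIndepFun (m := fun _ : Fin m × Fin d => (inferInstance : MeasurableSpace ℝ))
      (fun p ω => X ω p.1 p.2) μ)
    (hlaw : ∀ k i, μ.map (fun ω => X ω k i) = rademacherLaw)
    (δ M Δ : ℝ) (hδ : 0 < δ) (hδ1 : δ ≤ 1)
    (hM : haveI : NeZero d := ⟨hd.ne'⟩; M = ⨆ i : Fin d, (A * A.transpose) i i)
    (hne : ∃ i : Fin d, (A * A.transpose) i i < M)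
    (hΔ : Δ = M - sSup {x : ℝ | ∃ j : Fin d, (A * A.transpose) j j = x ∧ x < M})
    (hΔpos : 0 < Δ)
    (jstar : Ω → Fin d)
    (hjstar : ∀ ω, ∀ i : Fin d,
      (m : ℝ)⁻¹ * (∑ k, X ω k i * ((A * A.transpose).mulVec (X ω k)) i)
        ≤ (m : ℝ)⁻¹ * (∑ k, X ω k (jstar ω) * ((A * A.transpose).mulVec (X ω k)) (jstar ω)))
    (hmlarge : haveI : NeZero d := ⟨hd.ne'⟩;
      8 * Real.log (2 * d / δ) / Δ ^ 2 *
          (⨆ i : Fin d, ∑ j ∈ Finset.univ \ {i}, ((A * A.transpose) i j) ^ 2)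
        < (m : ℝ)) :
    haveI : NeZero d := ⟨hd.ne'⟩
    ENNReal.ofReal (1 - δ)
      ≤ μ {ω | Real.sqrt (∑ j, (A (jstar ω) j) ^ 2)
            = ⨆ i : Fin d, Real.sqrt (∑ j, (A i j) ^ 2)} := by
  haveI : NeZero d := ⟨hd.ne'⟩
  haveI : Nonempty (Fin d) := ⟨⟨0, hd⟩⟩
  set B : Matrix (Fin d) (Fin d) ℝ := A * A.transpose with hBdef
  have hm' : (0 : ℝ) < m := by exact_mod_cast hm
  -- basic facts about B
  have fBii : ∀ i : Fin d, B i i = ∑ j, A i j ^ 2 := by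
    intro i
    rw [hBdef, Matrix.mul_apply]
    exact Finset.sum_congr rfl fun j _ => by rw [Matrix.transpose_apply, sq]
  have bddB : BddAbove (Set.range fun i : Fin d => B i i) :=
    (Set.finite_range _).bddAbove
  obtain ⟨i₀, hi₀⟩ := Finite.exists_max (fun i : Fin d => B i i)
  have hMi₀ : M = B i₀ i₀ := by
    rw [hM]
    exact le_antisymm (ciSup_le hi₀) (le_ciSup bddB i₀)
  have fgap : ∀ i : Fin d, B i i < M → B i i ≤ M - Δ := by
    intro i hlt
    have hmem : B i i ∈ {x : ℝ | ∃ j : Fin d, B j j = x ∧ x < M} := ⟨i, rfl, hlt⟩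
    have hsub : {x : ℝ | ∃ j : Fin d, B j j = x ∧ x < M} ⊆ Set.range fun j : Fin d => B j j :=
      fun x ⟨j, hj, _⟩ => ⟨j, hj⟩
    have hbdd : BddAbove {x : ℝ | ∃ j : Fin d, B j j = x ∧ x < M} :=
      ((Set.finite_range _).subset hsub).bddAbove
    have := le_csSup hbdd hmem
    have hsSup : sSup {x : ℝ | ∃ j : Fin d, B j j = x ∧ x < M} = M - Δ := by
      rw [hΔ]; ring
    linarith [hsSup ▸ this]
  -- the push-forward setup
  set T : Ω → (Fin m × Fin d → ℝ) := fun ω p => X ω p.1 p.2 with hTdef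
  have hT : Measurable T := measurable_pi_lambda _ fun p => hmeas p.1 p.2
  set P : Measure (Fin m × Fin d → ℝ) := Measure.pi (fun _ : Fin m × Fin d => rademacherLaw)
    with hPdef
  have hmap : P = μ.map T := by
    rw [hPdef]
    apply Measure.pi_eq
    intro s hs
    rw [Measure.map_apply hT (MeasurableSet.univ_pi hs)]
    have hpre : T ⁻¹' Set.pi Set.univ s
        = ⋂ p ∈ (Finset.univ : Finset (Fin m × Fin d)), (fun ω => X ω p.1 p.2) ⁻¹' s p := by
      ext ω
      simp [Set.mem_pi, hTdef]
    rw [hpre, hindep.measure_inter_preimage_eq_mul Finset.univ (fun p _ => hs p)]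
    refine Finset.prod_congr rfl fun p _ => ?_
    rw [← hlaw p.1 p.2, Measure.map_apply (hmeas p.1 p.2) (hs p)]
  -- the good event
  set Sv : Fin d → (Fin m × Fin d → ℝ) → ℝ := fun i x =>
    ∑ k : Fin m, ∑ j ∈ Finset.univ \ {i}, B i j * (x (k, i) * x (k, j)) with hSvdef
  set G : Set (Fin m × Fin d → ℝ) :=
    {x | (∀ p, x p = 1 ∨ x p = -1) ∧ ∀ i : Fin d, |Sv i x| < m * Δ / 2} with hGdef
  have hsignmeas : MeasurableSet {x : Fin m × Fin d → ℝ | ∀ p, x p = 1 ∨ x p = -1} := by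
    have : {x : Fin m × Fin d → ℝ | ∀ p, x p = 1 ∨ x p = -1}
        = Set.pi Set.univ (fun _ : Fin m × Fin d => ({1, -1} : Set ℝ)) := by
      ext x
      simp [Set.mem_pi]
    rw [this]
    exact MeasurableSet.univ_pi fun _ => (Set.toFinite _).measurableSet
  have hconcmeas : MeasurableSet {x : Fin m × Fin d → ℝ | ∀ i : Fin d, |Sv i x| < m * Δ / 2} := by
    have : {x : Fin m × Fin d → ℝ | ∀ i : Fin d, |Sv i x| < m * Δ / 2}
        = ⋂ i : Fin d, {x | |Sv i x| < m * Δ / 2} := by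
      ext x; simp
    rw [this]
    exact MeasurableSet.iInter fun i =>
      measurableSet_lt (Sfun_measurable i (fun j => B i j)).abs measurable_const
  have hGmeas : MeasurableSet G := hsignmeas.inter hconcmeas
  -- Part 1: on the good event, jstar attains the max diagonal
  have hincl : T ⁻¹' G ⊆ {ω | Real.sqrt (∑ j, (A (jstar ω) j) ^ 2)
      = ⨆ i : Fin d, Real.sqrt (∑ j, (A i j) ^ 2)} := by
    intro ω hω
    obtain ⟨hsign, hconc⟩ := hω
    have hexp : ∀ i : Fin d, (∑ k, X ω k i * B.mulVec (X ω k) i)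
        = m * B i i + Sv i (T ω) := by
      intro i
      have hterm : ∀ k : Fin m, X ω k i * B.mulVec (X ω k) i
          = B i i + ∑ j ∈ Finset.univ \ {i}, B i j * (X ω k i * X ω k j) := by
        intro k
        have hmv : B.mulVec (X ω k) i = ∑ j, B i j * X ω k j := by
          simp [Matrix.mulVec, dotProduct]
        rw [hmv, Finset.mul_sum]
        have : ∀ j : Fin d, X ω k i * (B i j * X ω k j)
            = B i j * (X ω k i * X ω k j) := fun j => by ring
        rw [Finset.sum_congr rfl fun j _ => this j]
        rw [Finset.sum_eq_sum_sdiff_singleton_add (Finset.mem_univ i)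
          (fun j => B i j * (X ω k i * X ω k j))]
        rw [pm_mul_self (hsign (k, i)), mul_one, add_comm]
      rw [Finset.sum_congr rfl fun k _ => hterm k, Finset.sum_add_distrib,
        Finset.sum_const, Finset.card_univ, Fintype.card_fin, nsmul_eq_mul]
    have hj := hjstar ω i₀
    rw [mul_le_mul_iff_of_pos_left (inv_pos.2 hm')] at hj
    rw [hexp i₀, hexp (jstar ω)] at hj
    have habs1 := abs_lt.1 (hconc i₀)
    have habs2 := abs_lt.1 (hconc (jstar ω))
    have hBj : M - Δ < B (jstar ω) (jstar ω) := by
      have hMB : B i₀ i₀ = M := hMi₀.symm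
      nlinarith [hj, habs1.1, habs2.2, hm']
    have hBeq : B (jstar ω) (jstar ω) = M := by
      by_contra hne'
      have hlt : B (jstar ω) (jstar ω) < M :=
        lt_of_le_of_ne (hMi₀ ▸ hi₀ (jstar ω)) hne'
      have := fgap _ hlt
      linarith
    have hsq : ∀ i : Fin d, Real.sqrt (∑ j, (A i j) ^ 2) = Real.sqrt (B i i) :=
      fun i => by rw [fBii]
    have hval : Real.sqrt (∑ j, (A (jstar ω) j) ^ 2) = Real.sqrt M := by
      rw [hsq, hBeq]
    show Real.sqrt (∑ j, (A (jstar ω) j) ^ 2)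
        = ⨆ i : Fin d, Real.sqrt (∑ j, (A i j) ^ 2)
    rw [hval]
    refine (le_antisymm (ciSup_le fun i => ?_) ?_).symm
    · rw [hsq i]
      exact Real.sqrt_le_sqrt (by rw [hMi₀]; exact hi₀ i)
    · rw [← hval]
      exact le_ciSup (f := fun i : Fin d => Real.sqrt (∑ j, (A i j) ^ 2))
        ((Set.finite_range _).bddAbove) (jstar ω)
  -- Part 2: the good event has high probability
  haveI : IsProbabilityMeasure P := by rw [hPdef]; infer_instance
  have hsign1 : P {x : Fin m × Fin d → ℝ | ∀ p, x p = 1 ∨ x p = -1} = 1 := by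
    rw [hPdef]
    exact pi_rademacher_sign
  have hsignc : P {x : Fin m × Fin d → ℝ | ∀ p, x p = 1 ∨ x p = -1}ᶜ = 0 := by
    rw [prob_compl_eq_one_sub hsignmeas, hsign1, tsub_self]
  set V := ⨆ i : Fin d, ∑ j ∈ Finset.univ \ {i}, B i j ^ 2 with hVdef
  have hVi_le : ∀ i : Fin d, (∑ j ∈ Finset.univ \ {i}, B i j ^ 2) ≤ V :=
    fun i => le_ciSup (f := fun i : Fin d => ∑ j ∈ Finset.univ \ {i}, B i j ^ 2)
      ((Set.finite_range _).bddAbove) i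
  have hVnn : 0 ≤ V :=
    le_trans (Finset.sum_nonneg fun j _ => sq_nonneg _) (hVi_le ⟨0, hd⟩)
  have hbadP : P Gᶜ ≤ ENNReal.ofReal δ := by
    have hsub : Gᶜ ⊆ {x : Fin m × Fin d → ℝ | ∀ p, x p = 1 ∨ x p = -1}ᶜ
        ∪ ⋃ i : Fin d, {x | m * Δ / 2 ≤ |Sv i x|} := by
      intro x hx
      by_cases hs : ∀ p, x p = 1 ∨ x p = -1
      · right
        rw [hGdef] at hx
        simp only [Set.mem_compl_iff, Set.mem_setOf_eq, not_and, not_forall, not_lt] at hx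
        obtain ⟨i, hi⟩ := hx hs
        exact Set.mem_iUnion.2 ⟨i, hi⟩
      · left
        exact hs
    refine (measure_mono hsub).trans ?_
    refine (measure_union_le _ _).trans ?_
    rw [hsignc, zero_add]
    refine (measure_iUnion_le _).trans ?_
    rw [tsum_fintype]
    rcases eq_or_lt_of_le hVnn with hV | hV
    · -- V = 0 : all off-diagonal entries vanish
      have hzero : ∀ i : Fin d, ∀ j ∈ Finset.univ \ {i}, B i j = 0 := by
        intro i j hj
        have hle : (∑ j ∈ Finset.univ \ {i}, B i j ^ 2) ≤ 0 := hV ▸ hVi_le i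
        have := (Finset.sum_eq_zero_iff_of_nonneg
          (fun j _ => sq_nonneg (B i j))).1
          (le_antisymm hle (Finset.sum_nonneg fun j _ => sq_nonneg _)) j hj
        exact pow_eq_zero_iff (n := 2) (by norm_num) |>.1 this
      have hempty : ∀ i : Fin d, {x : Fin m × Fin d → ℝ | m * Δ / 2 ≤ |Sv i x|} = ∅ := by
        intro i
        ext x
        simp only [Set.mem_setOf_eq, Set.mem_empty_iff_false, iff_false, not_le]
        have : Sv i x = 0 := by
          rw [hSvdef]
          refine Finset.sum_eq_zero fun k _ => Finset.sum_eq_zero fun j hj => ?_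
          rw [hzero i j hj, zero_mul]
        rw [this, abs_zero]
        positivity
      simp only [hempty, measure_empty, Finset.sum_const, smul_zero]
      exact zero_le
    · -- V > 0 : Chernoff bound
      set t := Δ / (2 * V) with htdef
      have ht0 : 0 ≤ t := by positivity
      have hperi : ∀ i : Fin d, P {x : Fin m × Fin d → ℝ | m * Δ / 2 ≤ |Sv i x|}
          ≤ ENNReal.ofReal (2 * Real.exp (-((m : ℝ) * Δ ^ 2 / (8 * V)))) := by
        intro i
        refine le_trans (measure_bad_le hd i (fun j => B i j) t (m * Δ / 2) ht0) ?_
        apply ENNReal.ofReal_le_ofReal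
        have hexple : (m : ℝ) * (t ^ 2 * (∑ j ∈ Finset.univ \ {i}, B i j ^ 2) / 2)
            - t * (m * Δ / 2) ≤ -((m : ℝ) * Δ ^ 2 / (8 * V)) := by
          have h1 : (m : ℝ) * (t ^ 2 * (∑ j ∈ Finset.univ \ {i}, B i j ^ 2) / 2)
              ≤ (m : ℝ) * (t ^ 2 * V / 2) := by
            gcongr
            exact hVi_le i
          have h2 : (m : ℝ) * (t ^ 2 * V / 2) - t * (m * Δ / 2)
              = -((m : ℝ) * Δ ^ 2 / (8 * V)) := by
            rw [htdef]
            field_simp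
            ring
          linarith
        gcongr
      calc ∑ i : Fin d, P {x : Fin m × Fin d → ℝ | m * Δ / 2 ≤ |Sv i x|}
          ≤ ∑ _i : Fin d, ENNReal.ofReal (2 * Real.exp (-((m : ℝ) * Δ ^ 2 / (8 * V)))) :=
            Finset.sum_le_sum fun i _ => hperi i
        _ = (d : ℝ≥0∞) * ENNReal.ofReal (2 * Real.exp (-((m : ℝ) * Δ ^ 2 / (8 * V)))) := by
            rw [Finset.sum_const, Finset.card_univ, Fintype.card_fin, nsmul_eq_mul]
        _ = ENNReal.ofReal ((d : ℝ) * (2 * Real.exp (-((m : ℝ) * Δ ^ 2 / (8 * V))))) := by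
            rw [← ENNReal.ofReal_natCast d, ← ENNReal.ofReal_mul (by positivity)]
        _ ≤ ENNReal.ofReal δ := by
            apply ENNReal.ofReal_le_ofReal
            have hdpos : (0 : ℝ) < d := by exact_mod_cast hd
            have h2d : (0 : ℝ) < 2 * d / δ := by positivity
            have hΔ2 : (0 : ℝ) < Δ ^ 2 := by positivity
            have h8 : 8 * Real.log (2 * d / δ) * V < m * Δ ^ 2 := by
              have hmm := mul_lt_mul_of_pos_right hmlarge hΔ2
              calc 8 * Real.log (2 * d / δ) * V
                  = 8 * Real.log (2 * d / δ) / Δ ^ 2 * V * Δ ^ 2 := by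
                    field_simp
                _ < (m : ℝ) * Δ ^ 2 := hmm
            have hlog : Real.log (2 * d / δ) < m * Δ ^ 2 / (8 * V) := by
              rw [lt_div_iff₀ (by positivity)]
              linarith
            have hexp2 : 2 * (d : ℝ) / δ < Real.exp (m * Δ ^ 2 / (8 * V)) := by
              calc 2 * (d : ℝ) / δ = Real.exp (Real.log (2 * d / δ)) :=
                    (Real.exp_log h2d).symm
                _ < _ := Real.exp_lt_exp.2 hlog
            have hE := Real.exp_pos ((m : ℝ) * Δ ^ 2 / (8 * V))
            rw [div_lt_iff₀ hδ] at hexp2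
            rw [Real.exp_neg]
            calc (d : ℝ) * (2 * (Real.exp ((m : ℝ) * Δ ^ 2 / (8 * V)))⁻¹)
                = (2 * d) * (Real.exp ((m : ℝ) * Δ ^ 2 / (8 * V)))⁻¹ := by ring
              _ ≤ (Real.exp ((m : ℝ) * Δ ^ 2 / (8 * V)) * δ)
                    * (Real.exp ((m : ℝ) * Δ ^ 2 / (8 * V)))⁻¹ := by
                  apply mul_le_mul_of_nonneg_right hexp2.le (by positivity)
              _ = δ := by field_simp
  have hPG : ENNReal.ofReal (1 - δ) ≤ P G := by
    have h1 := prob_compl_eq_one_sub (μ := P) hGmeas.compl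
    rw [compl_compl] at h1
    calc ENNReal.ofReal (1 - δ) = 1 - ENNReal.ofReal δ := by
          rw [ENNReal.ofReal_sub _ hδ.le, ENNReal.ofReal_one]
      _ ≤ 1 - P Gᶜ := tsub_le_tsub_left hbadP 1
      _ = P G := h1.symm
  show ENNReal.ofReal (1 - δ) ≤ μ {ω | Real.sqrt (∑ j, (A (jstar ω) j) ^ 2)
      = ⨆ i : Fin d, Real.sqrt (∑ j, (A i j) ^ 2)}
  calc ENNReal.ofReal (1 - δ) ≤ P G := hPG
    _ = μ (T ⁻¹' G) := by rw [hmap, Measure.map_apply hT hGmeas]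
    _ ≤ _ := measure_mono hincl
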